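/- Let $u, u_1, u_2, u_3, u_4$ be distinct complex numbers with $u_1 - u_2 + u_3 - u_4 = 0$ (i.e., $u_1u_2u_3u_4$ is a parallelogram) and with $X := -\frac{(u_2-u)(u_4-u)}{(u_1-u)(u_3-u)}$ well-defined with $X \neq -1$. Then the second root of the central relation is $\tilde{u} = u + \frac{(u_1-u)+(u_2-u)+(u_3-u)+(u_4-u)}{2}$. -/

import Mathlib

open Complex

/-- if `u₁ - u₂ + u₃ - u₄ = 0` (parallelogram case), the second root of
the central relation is `ũ = u + ((u₁-u)+(u₂-u)+(u₃-u)+(u₄-u))/2`. -/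
theorem stmt6 (u u₁ u₂ u₃ u₄ : ℂ)
    (hdist : List.Pairwise (· ≠ ·) [u, u₁, u₂, u₃, u₄])
    (hden : (u₁ - u) * (u₃ - u) ≠ 0)
    (hpar : u₁ - u₂ + u₃ - u₄ = 0)
    (X : ℂ) (hXdef : X = -((u₂ - u) * (u₄ - u)) / ((u₁ - u) * (u₃ - u)))
    (hX : X ≠ -1) :
    ((u₂ + u₄) + X * (u₁ + u₃)) / (1 + X) - u
      = u + ((u₁ - u) + (u₂ - u) + (u₃ - u) + (u₄ - u)) / 2 := by
  have hX1 : 1 + X ≠ 0 := by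
    intro h
    exact hX (by linear_combination h)
  have hs : u₁ + u₃ = u₂ + u₄ := by linear_combination hpar
  rw [hs] at *; clear hs
  field_simp
  linear_combination (-1) * hpar
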